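/- arXiv:0901.2923 — 2 statements merged into one kernel-verified Lean document; each statement's English description precedes it below -/
import Mathlib

section
/- Let I₂(N) = ∫_{O(N)} ||U||₁² dU, the second moment of the 1-norm with respect to the Haar probability measure on the compact group O(N). Then for every ε > 0 there exists N₀ such that for all N ≥ N₀, I₂(N) ≥ (1 + 4/π − ε)·N². -/
set_option maxRecDepth 8000
set_option linter.unreachableTactic false
set_option linter.unusedTactic false
open Matrix MeasureTheory

noncomputable instance matrixMeasurableSpace (N : ℕ) :
    MeasurableSpace (Matrix (Fin N) (Fin N) ℝ) :=
  (inferInstance : MeasurableSpace (Fin N → Fin N → ℝ))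

variable {N : ℕ}

/-- entry function -/
def ent (i j : Fin N) (U : orthogonalGroup (Fin N) ℝ) : ℝ :=
  (U : Matrix (Fin N) (Fin N) ℝ) i j

lemma ent_meas (i j : Fin N) : Measurable (ent i j) :=
  (measurable_pi_apply j).comp ((measurable_pi_apply i).comp measurable_subtype_coe)

lemma col_sq (j : Fin N) (U : orthogonalGroup (Fin N) ℝ) :
    ∑ i, (ent i j U) ^ 2 = 1 := by
  have h := U.prop.1
  have := congrFun (congrFun h j) j
  rw [Matrix.mul_apply] at this
  simpa [ent, Matrix.star_apply, sq] using this

lemma ent_abs_le (i j : Fin N) (U : orthogonalGroup (Fin N) ℝ) : |ent i j U| ≤ 1 := by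
  have h1 : (ent i j U) ^ 2 ≤ 1 := by
    rw [← col_sq j U]
    exact Finset.single_le_sum (f := fun c => (ent c j U)^2) (fun c _ => sq_nonneg _) (Finset.mem_univ i)
  exact (sq_le_one_iff_abs_le_one _).mp h1

lemma integ_bdd {μ : Measure (orthogonalGroup (Fin N) ℝ)} [IsProbabilityMeasure μ]
    {f : orthogonalGroup (Fin N) ℝ → ℝ} (hm : Measurable f) (C : ℝ)
    (hC : ∀ x, |f x| ≤ C) : Integrable f μ :=
  (integrable_const C).mono' hm.aestronglyMeasurable
    (ae_of_all _ fun x => by simpa [Real.norm_eq_abs] using hC x)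

lemma inv_int {μ : Measure (orthogonalGroup (Fin N) ℝ)}
    (hinv : ∀ g : orthogonalGroup (Fin N) ℝ, MeasurePreserving (fun x => g * x) μ μ)
    (g : orthogonalGroup (Fin N) ℝ) {f : orthogonalGroup (Fin N) ℝ → ℝ}
    (hf : Measurable f) :
    ∫ x, f (g * x) ∂μ = ∫ x, f x ∂μ := by
  have h := (hinv g).map_eq
  calc ∫ x, f (g * x) ∂μ = ∫ y, f y ∂(Measure.map (fun x => g * x) μ) := by
        rw [integral_map (hinv g).measurable.aemeasurable
          (by rw [h]; exact hf.aestronglyMeasurable)]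
    _ = ∫ x, f x ∂μ := by rw [h]

lemma int_cs {μ : Measure (orthogonalGroup (Fin N) ℝ)} [IsProbabilityMeasure μ]
    {f g : orthogonalGroup (Fin N) ℝ → ℝ}
    (hf2 : Integrable (fun x => f x ^ 2) μ) (hg2 : Integrable (fun x => g x ^ 2) μ)
    (hfg : Integrable (fun x => f x * g x) μ) :
    (∫ x, f x * g x ∂μ) ^ 2 ≤ (∫ x, f x ^ 2 ∂μ) * (∫ x, g x ^ 2 ∂μ) := by
  set A := ∫ x, f x ^ 2 ∂μ
  set B := ∫ x, f x * g x ∂μ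
  set C := ∫ x, g x ^ 2 ∂μ
  have key : ∀ t : ℝ, 0 ≤ t ^ 2 * A - 2 * t * B + C := by
    intro t
    have h0 : 0 ≤ ∫ x, (t * f x - g x) ^ 2 ∂μ :=
      integral_nonneg fun x => sq_nonneg _
    have hexp : ∀ x : orthogonalGroup (Fin N) ℝ,
        (t * f x - g x) ^ 2 = t ^ 2 * f x ^ 2 - 2 * t * (f x * g x) + g x ^ 2 := by
      intro x; ring
    rw [integral_congr_ae (ae_of_all _ hexp)] at h0
    have e1 : ∫ x, (t ^ 2 * f x ^ 2 - 2 * t * (f x * g x) + g x ^ 2) ∂μ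
        = (∫ x, (t ^ 2 * f x ^ 2 - 2 * t * (f x * g x)) ∂μ) + C :=
      integral_add ((hf2.const_mul _).sub (hfg.const_mul _)) hg2
    have e2 : ∫ x, (t ^ 2 * f x ^ 2 - 2 * t * (f x * g x)) ∂μ
        = (∫ x, t ^ 2 * f x ^ 2 ∂μ) - ∫ x, 2 * t * (f x * g x) ∂μ :=
      integral_sub (hf2.const_mul _) (hfg.const_mul _)
    rw [e1, e2, integral_const_mul, integral_const_mul] at h0
    exact h0
  have hA : 0 ≤ A := integral_nonneg fun x => sq_nonneg _
  have hC : 0 ≤ C := integral_nonneg fun x => sq_nonneg _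
  rcases eq_or_lt_of_le hA with hA0 | hApos
  · by_cases hB : B = 0
    · rw [hB]
      nlinarith [mul_nonneg hA hC]
    · exfalso
      have h1 := key ((C + 1) / (2 * B))
      rw [← hA0] at h1
      have : 2 * ((C+1)/(2*B)) * B = C + 1 := by field_simp
      nlinarith [h1]
  · have h1 := key (B / A)
    have h2 : (B/A)^2 * A = B^2/A := by field_simp
    have h3 : 2 * (B/A) * B = 2 * (B^2/A) := by field_simp
    rw [h2, h3] at h1
    have h4 : B^2/A ≤ C := by linarith
    have h5 : B^2 ≤ C * A := (div_le_iff₀ hApos).mp h4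
    linarith [h5, mul_comm C A]

lemma sum_dite2 (i k : Fin N) (h : i ≠ k) (x y : ℝ) :
    ∑ c, (if c = i then x else if c = k then y else 0) = x + y := by
  classical
  have hc : ∀ c : Fin N, (if c = i then x else if c = k then y else 0)
      = (if c = i then x else 0) + (if c = k then y else 0) := by
    intro c
    by_cases hci : c = i
    · subst hci; simp [h]
    · simp [hci]
  simp only [hc, Finset.sum_add_distrib, Finset.sum_ite_eq', Finset.mem_univ, if_true]

noncomputable def rotM (i k : Fin N) : Matrix (Fin N) (Fin N) ℝ :=
  fun a b =>
    if a = i then (if b = i then Real.sqrt 2 / 2 else if b = k then -(Real.sqrt 2 / 2) else 0)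
    else if a = k then (if b = i then Real.sqrt 2 / 2 else if b = k then Real.sqrt 2 / 2 else 0)
    else if a = b then 1 else 0

lemma s_sq : (Real.sqrt 2 / 2) * (Real.sqrt 2 / 2) = 1 / 2 := by
  rw [div_mul_div_comm, Real.mul_self_sqrt (by norm_num)]; norm_num

lemma rot_row_i (i k : Fin N) (h : i ≠ k) (f : Fin N → ℝ) :
    ∑ c, rotM i k i c * f c = (Real.sqrt 2 / 2) * f i - (Real.sqrt 2 / 2) * f k := by
  have hc : ∀ c, rotM i k i c * f c
      = (if c = i then (Real.sqrt 2 / 2) * f i else if c = k then (-(Real.sqrt 2 / 2)) * f k else 0) := by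
    intro c
    by_cases hci : c = i
    · subst hci; simp [rotM]
    · by_cases hck : c = k
      · subst hck; simp [rotM, hci, h]
      · simp [rotM, hci, hck]
  rw [Finset.sum_congr rfl (fun c _ => hc c), sum_dite2 i k h]
  ring

lemma rot_row_k (i k : Fin N) (h : i ≠ k) (f : Fin N → ℝ) :
    ∑ c, rotM i k k c * f c = (Real.sqrt 2 / 2) * f i + (Real.sqrt 2 / 2) * f k := by
  have hc : ∀ c, rotM i k k c * f c
      = (if c = i then (Real.sqrt 2 / 2) * f i else if c = k then (Real.sqrt 2 / 2) * f k else 0) := by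
    intro c
    by_cases hci : c = i
    · subst hci; simp [rotM, h.symm]
    · by_cases hck : c = k
      · subst hck; simp [rotM, hci, h.symm]
      · simp [rotM, hci, hck, Ne.symm h]
  rw [Finset.sum_congr rfl (fun c _ => hc c), sum_dite2 i k h]

lemma rot_row_other (i k a : Fin N) (hai : a ≠ i) (hak : a ≠ k) (f : Fin N → ℝ) :
    ∑ c, rotM i k a c * f c = f a := by
  have hc : ∀ c, rotM i k a c * f c = (if a = c then f c else 0) := by
    intro c
    by_cases hac : a = c
    · subst hac; simp [rotM, hai, hak]
    · simp [rotM, hai, hak, hac]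
  rw [Finset.sum_congr rfl (fun c _ => hc c), Finset.sum_ite_eq, if_pos (Finset.mem_univ a)]

lemma rotM_mem (i k : Fin N) (h : i ≠ k) : rotM i k ∈ orthogonalGroup (Fin N) ℝ := by
  have hs := s_sq
  rw [Matrix.mem_orthogonalGroup_iff]
  ext a b
  rw [Matrix.mul_apply]
  have hstar : ∀ c, ((rotM i k)ᵀ) c b = rotM i k b c := fun c => rfl
  simp only [hstar]
  by_cases ha : a = i
  · rw [ha, rot_row_i i k h]
    simp only [rotM, Matrix.one_apply]
    split_ifs <;> subst_vars <;> first | rfl | nlinarith [hs] | contradiction | (exact absurd rfl h) | ring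
  · by_cases hak : a = k
    · rw [hak, rot_row_k i k h]
      simp only [rotM, Matrix.one_apply]
      split_ifs <;> subst_vars <;> first | rfl | nlinarith [hs] | contradiction | (exact absurd rfl h) | ring
    · rw [rot_row_other i k a ha hak]
      simp only [rotM, Matrix.one_apply]
      split_ifs <;> subst_vars <;> first | rfl | nlinarith [hs] | contradiction | (exact absurd rfl h) | ring

noncomputable def flipM (k : Fin N) : Matrix (Fin N) (Fin N) ℝ :=
  Matrix.diagonal (fun a => if a = k then (-1 : ℝ) else 1)

lemma flipM_mem (k : Fin N) : flipM k ∈ orthogonalGroup (Fin N) ℝ := by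
  rw [Matrix.mem_orthogonalGroup_iff]
  have hstar : star (flipM k) = flipM k := by
    ext a b
    simp [flipM, Matrix.star_apply, Matrix.diagonal_apply]
    split_ifs with h1 h2 h3 <;> simp_all [h1, eq_comm]
  rw [show (flipM k)ᵀ = star (flipM k) from rfl, hstar, flipM, Matrix.diagonal_mul_diagonal]
  ext a b
  simp [Matrix.diagonal_apply, Matrix.one_apply]
  split_ifs <;> norm_num

lemma flip_mul_apply (k : Fin N) (U : Matrix (Fin N) (Fin N) ℝ) (a j : Fin N) :
    (flipM k * U) a j = (if a = k then (-1:ℝ) else 1) * U a j := by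
  rw [flipM, Matrix.diagonal_mul]

lemma rot_mul_apply_i (i k : Fin N) (h : i ≠ k) (U : Matrix (Fin N) (Fin N) ℝ) (j : Fin N) :
    (rotM i k * U) i j = (Real.sqrt 2 / 2) * U i j - (Real.sqrt 2 / 2) * U k j := by
  rw [Matrix.mul_apply]; exact rot_row_i i k h _

lemma rot_mul_apply_k (i k : Fin N) (h : i ≠ k) (U : Matrix (Fin N) (Fin N) ℝ) (j : Fin N) :
    (rotM i k * U) k j = (Real.sqrt 2 / 2) * U i j + (Real.sqrt 2 / 2) * U k j := by
  rw [Matrix.mul_apply]; exact rot_row_k i k h _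


lemma abs_mul_le_one' {x y : ℝ} (hx : |x| ≤ 1) (hy : |y| ≤ 1) : |x * y| ≤ 1 := by
  rw [abs_mul]; nlinarith [abs_nonneg x, abs_nonneg y]

lemma integral_lin3 {μ : Measure (orthogonalGroup (Fin N) ℝ)} (c1 c2 c3 : ℝ)
    {u1 u2 u3 : orthogonalGroup (Fin N) ℝ → ℝ}
    (h1 : Integrable u1 μ) (h2 : Integrable u2 μ) (h3 : Integrable u3 μ) :
    ∫ x, (c1 * u1 x + c2 * u2 x + c3 * u3 x) ∂μ
      = c1 * (∫ x, u1 x ∂μ) + c2 * (∫ x, u2 x ∂μ) + c3 * (∫ x, u3 x ∂μ) := by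
  have e1 : ∫ x, (c1 * u1 x + c2 * u2 x + c3 * u3 x) ∂μ
      = (∫ x, (c1 * u1 x + c2 * u2 x) ∂μ) + ∫ x, c3 * u3 x ∂μ :=
    integral_add ((h1.const_mul _).add (h2.const_mul _)) (h3.const_mul _)
  have e2 : ∫ x, (c1 * u1 x + c2 * u2 x) ∂μ
      = (∫ x, c1 * u1 x ∂μ) + ∫ x, c2 * u2 x ∂μ :=
    integral_add (h1.const_mul _) (h2.const_mul _)
  rw [e1, e2, integral_const_mul, integral_const_mul, integral_const_mul]

lemma integral_lin5 {μ : Measure (orthogonalGroup (Fin N) ℝ)} (c1 c2 c3 c4 c5 : ℝ)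
    {u1 u2 u3 u4 u5 : orthogonalGroup (Fin N) ℝ → ℝ}
    (h1 : Integrable u1 μ) (h2 : Integrable u2 μ) (h3 : Integrable u3 μ)
    (h4 : Integrable u4 μ) (h5 : Integrable u5 μ) :
    ∫ x, (c1 * u1 x + c2 * u2 x + c3 * u3 x + c4 * u4 x + c5 * u5 x) ∂μ
      = c1 * (∫ x, u1 x ∂μ) + c2 * (∫ x, u2 x ∂μ) + c3 * (∫ x, u3 x ∂μ)
        + c4 * (∫ x, u4 x ∂μ) + c5 * (∫ x, u5 x ∂μ) := by
  have e1 : ∫ x, (c1 * u1 x + c2 * u2 x + c3 * u3 x + c4 * u4 x + c5 * u5 x) ∂μ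
      = (∫ x, (c1 * u1 x + c2 * u2 x + c3 * u3 x + c4 * u4 x) ∂μ) + ∫ x, c5 * u5 x ∂μ :=
    integral_add ((((h1.const_mul c1).add (h2.const_mul c2)).add (h3.const_mul c3)).add
      (h4.const_mul c4)) (h5.const_mul c5)
  have e2 : ∫ x, (c1 * u1 x + c2 * u2 x + c3 * u3 x + c4 * u4 x) ∂μ
      = (∫ x, (c1 * u1 x + c2 * u2 x + c3 * u3 x) ∂μ) + ∫ x, c4 * u4 x ∂μ :=
    integral_add (((h1.const_mul c1).add (h2.const_mul c2)).add (h3.const_mul c3))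
      (h4.const_mul c4)
  rw [e1, e2, integral_lin3 c1 c2 c3 h1 h2 h3, integral_const_mul, integral_const_mul]

lemma pair_facts {μ : Measure (orthogonalGroup (Fin N) ℝ)} [IsProbabilityMeasure μ]
    (hinv : ∀ g : orthogonalGroup (Fin N) ℝ, MeasurePreserving (fun x => g * x) μ μ)
    {i k : Fin N} (hik : i ≠ k) (j : Fin N) :
    (∫ x, ent k j x ^ 2 ∂μ = ∫ x, ent i j x ^ 2 ∂μ) ∧
    (∫ x, ent k j x ^ 4 ∂μ = ∫ x, ent i j x ^ 4 ∂μ) ∧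
    (∫ x, ent i j x ^ 2 * ent k j x ^ 2 ∂μ = (∫ x, ent i j x ^ 4 ∂μ) / 3) := by
  classical
  set a : orthogonalGroup (Fin N) ℝ → ℝ := ent i j with ha
  set b : orthogonalGroup (Fin N) ℝ → ℝ := ent k j with hb
  have ma : Measurable a := ent_meas i j
  have mb : Measurable b := ent_meas k j
  have bda : ∀ x, |a x| ≤ 1 := ent_abs_le i j
  have bdb : ∀ x, |b x| ≤ 1 := ent_abs_le k j
  -- integrability of all monomials we need
  have Ia2 : Integrable (fun x => a x ^ 2) μ :=
    integ_bdd (ma.pow_const 2) 1 (fun x => by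
      rw [abs_pow]; exact pow_le_one₀ (abs_nonneg _) (bda x))
  have Ib2 : Integrable (fun x => b x ^ 2) μ :=
    integ_bdd (mb.pow_const 2) 1 (fun x => by
      rw [abs_pow]; exact pow_le_one₀ (abs_nonneg _) (bdb x))
  have Iab : Integrable (fun x => a x * b x) μ :=
    integ_bdd (ma.mul mb) 1 (fun x => abs_mul_le_one' (bda x) (bdb x))
  have Ia4 : Integrable (fun x => a x ^ 4) μ :=
    integ_bdd (ma.pow_const 4) 1 (fun x => by
      rw [abs_pow]; exact pow_le_one₀ (abs_nonneg _) (bda x))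
  have Ib4 : Integrable (fun x => b x ^ 4) μ :=
    integ_bdd (mb.pow_const 4) 1 (fun x => by
      rw [abs_pow]; exact pow_le_one₀ (abs_nonneg _) (bdb x))
  have Ia3b : Integrable (fun x => a x ^ 3 * b x) μ :=
    integ_bdd ((ma.pow_const 3).mul mb) 1 (fun x => abs_mul_le_one'
      (by rw [abs_pow]; exact pow_le_one₀ (abs_nonneg _) (bda x)) (bdb x))
  have Iab3 : Integrable (fun x => a x * b x ^ 3) μ :=
    integ_bdd (ma.mul (mb.pow_const 3)) 1 (fun x => abs_mul_le_one'
      (bda x) (by rw [abs_pow]; exact pow_le_one₀ (abs_nonneg _) (bdb x)))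
  have Ia2b2 : Integrable (fun x => a x ^ 2 * b x ^ 2) μ :=
    integ_bdd ((ma.pow_const 2).mul (mb.pow_const 2)) 1 (fun x => abs_mul_le_one'
      (by rw [abs_pow]; exact pow_le_one₀ (abs_nonneg _) (bda x))
      (by rw [abs_pow]; exact pow_le_one₀ (abs_nonneg _) (bdb x)))
  -- group elements
  set gR : orthogonalGroup (Fin N) ℝ := ⟨rotM i k, rotM_mem i k hik⟩ with hgR
  set gF : orthogonalGroup (Fin N) ℝ := ⟨flipM k, flipM_mem k⟩ with hgF
  have hFa : ∀ x, a (gF * x) = a x := by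
    intro x
    show (flipM k * (x : Matrix (Fin N) (Fin N) ℝ)) i j = a x
    rw [flip_mul_apply, if_neg hik, one_mul]; rfl
  have hFb : ∀ x, b (gF * x) = -(b x) := by
    intro x
    show (flipM k * (x : Matrix (Fin N) (Fin N) ℝ)) k j = -(b x)
    rw [flip_mul_apply, if_pos rfl]; ring_nf; rfl
  have hRa : ∀ x, a (gR * x)
      = Real.sqrt 2 / 2 * a x - Real.sqrt 2 / 2 * b x := by
    intro x
    show (rotM i k * (x : Matrix (Fin N) (Fin N) ℝ)) i j = _
    rw [rot_mul_apply_i i k hik]; rfl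
  have hRb : ∀ x, b (gR * x)
      = Real.sqrt 2 / 2 * a x + Real.sqrt 2 / 2 * b x := by
    intro x
    show (rotM i k * (x : Matrix (Fin N) (Fin N) ℝ)) k j = _
    rw [rot_mul_apply_k i k hik]; rfl
  -- odd moments vanish
  have hC : ∫ x, a x * b x ∂μ = 0 := by
    have h := inv_int hinv gF (f := fun x => a x * b x) (ma.mul mb)
    have hpt : ∀ x, a (gF * x) * b (gF * x) = -(a x * b x) := by
      intro x; rw [hFa, hFb]; ring
    rw [integral_congr_ae (ae_of_all _ hpt), integral_neg] at h
    linarith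
  have hQ3 : ∫ x, a x ^ 3 * b x ∂μ = 0 := by
    have h := inv_int hinv gF (f := fun x => a x ^ 3 * b x) ((ma.pow_const 3).mul mb)
    have hpt : ∀ x, a (gF * x) ^ 3 * b (gF * x) = -(a x ^ 3 * b x) := by
      intro x; rw [hFa, hFb]; ring
    rw [integral_congr_ae (ae_of_all _ hpt), integral_neg] at h
    linarith
  have hQ1 : ∫ x, a x * b x ^ 3 ∂μ = 0 := by
    have h := inv_int hinv gF (f := fun x => a x * b x ^ 3) (ma.mul (mb.pow_const 3))
    have hpt : ∀ x, a (gF * x) * b (gF * x) ^ 3 = -(a x * b x ^ 3) := by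
      intro x; rw [hFa, hFb]; ring
    rw [integral_congr_ae (ae_of_all _ hpt), integral_neg] at h
    linarith
  -- second moments
  have hE1 : (1/2) * (∫ x, a x ^ 2 ∂μ) + (-1) * (∫ x, a x * b x ∂μ)
      + (1/2) * (∫ x, b x ^ 2 ∂μ) = ∫ x, a x ^ 2 ∂μ := by
    have h := inv_int hinv gR (f := fun x => a x ^ 2) (ma.pow_const 2)
    have hpt : ∀ x, a (gR * x) ^ 2
        = (1/2) * (a x ^ 2) + (-1) * (a x * b x) + (1/2) * (b x ^ 2) := by
      intro x; rw [hRa]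
      linear_combination (a x - b x) ^ 2 * s_sq
    rw [integral_congr_ae (ae_of_all _ hpt), integral_lin3 _ _ _ Ia2 Iab Ib2] at h
    exact h
  have hE2 : (1/2) * (∫ x, a x ^ 2 ∂μ) + (1 : ℝ) * (∫ x, a x * b x ∂μ)
      + (1/2) * (∫ x, b x ^ 2 ∂μ) = ∫ x, b x ^ 2 ∂μ := by
    have h := inv_int hinv gR (f := fun x => b x ^ 2) (mb.pow_const 2)
    have hpt : ∀ x, b (gR * x) ^ 2
        = (1/2) * (a x ^ 2) + (1 : ℝ) * (a x * b x) + (1/2) * (b x ^ 2) := by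
      intro x; rw [hRb]
      linear_combination (a x + b x) ^ 2 * s_sq
    rw [integral_congr_ae (ae_of_all _ hpt), integral_lin3 _ _ _ Ia2 Iab Ib2] at h
    exact h
  -- fourth moments
  have hE4 : (1/4) * (∫ x, a x ^ 4 ∂μ) + (-1) * (∫ x, a x ^ 3 * b x ∂μ)
      + (3/2) * (∫ x, a x ^ 2 * b x ^ 2 ∂μ) + (-1) * (∫ x, a x * b x ^ 3 ∂μ)
      + (1/4) * (∫ x, b x ^ 4 ∂μ) = ∫ x, a x ^ 4 ∂μ := by
    have h := inv_int hinv gR (f := fun x => a x ^ 4) (ma.pow_const 4)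
    have hpt : ∀ x, a (gR * x) ^ 4
        = (1/4) * (a x ^ 4) + (-1) * (a x ^ 3 * b x) + (3/2) * (a x ^ 2 * b x ^ 2)
          + (-1) * (a x * b x ^ 3) + (1/4) * (b x ^ 4) := by
      intro x; rw [hRa]
      linear_combination ((Real.sqrt 2 / 2) * (Real.sqrt 2 / 2) + 1/2) * (a x - b x) ^ 4 * s_sq
    rw [integral_congr_ae (ae_of_all _ hpt),
      integral_lin5 _ _ _ _ _ Ia4 Ia3b Ia2b2 Iab3 Ib4] at h
    exact h
  have hE5 : (1/4) * (∫ x, a x ^ 4 ∂μ) + (1 : ℝ) * (∫ x, a x ^ 3 * b x ∂μ)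
      + (3/2) * (∫ x, a x ^ 2 * b x ^ 2 ∂μ) + (1 : ℝ) * (∫ x, a x * b x ^ 3 ∂μ)
      + (1/4) * (∫ x, b x ^ 4 ∂μ) = ∫ x, b x ^ 4 ∂μ := by
    have h := inv_int hinv gR (f := fun x => b x ^ 4) (mb.pow_const 4)
    have hpt : ∀ x, b (gR * x) ^ 4
        = (1/4) * (a x ^ 4) + (1 : ℝ) * (a x ^ 3 * b x) + (3/2) * (a x ^ 2 * b x ^ 2)
          + (1 : ℝ) * (a x * b x ^ 3) + (1/4) * (b x ^ 4) := by
      intro x; rw [hRb]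
      linear_combination ((Real.sqrt 2 / 2) * (Real.sqrt 2 / 2) + 1/2) * (a x + b x) ^ 4 * s_sq
    rw [integral_congr_ae (ae_of_all _ hpt),
      integral_lin5 _ _ _ _ _ Ia4 Ia3b Ia2b2 Iab3 Ib4] at h
    exact h
  refine ⟨by linarith, by linarith, by linarith⟩

lemma Ient2 {μ : Measure (orthogonalGroup (Fin N) ℝ)} [IsProbabilityMeasure μ]
    (i j : Fin N) : Integrable (fun x => ent i j x ^ 2) μ :=
  integ_bdd ((ent_meas i j).pow_const 2) 1 (fun x => by
    rw [abs_pow]; exact pow_le_one₀ (abs_nonneg _) (ent_abs_le i j x))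

lemma m2_val {μ : Measure (orthogonalGroup (Fin N) ℝ)} [IsProbabilityMeasure μ]
    (hinv : ∀ g : orthogonalGroup (Fin N) ℝ, MeasurePreserving (fun x => g * x) μ μ)
    (hN : 0 < N) (i j : Fin N) :
    ∫ x, ent i j x ^ 2 ∂μ = 1 / N := by
  classical
  set i0 : Fin N := ⟨0, hN⟩ with hi0
  have hall : ∀ i' : Fin N, ∫ x, ent i' j x ^ 2 ∂μ = ∫ x, ent i0 j x ^ 2 ∂μ := by
    intro i'
    by_cases h : i' = i0
    · rw [h]
    · exact (pair_facts hinv (fun hh => h hh.symm : i0 ≠ i') j).1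
  have hsum : ∑ i' : Fin N, ∫ x, ent i' j x ^ 2 ∂μ = 1 := by
    rw [← integral_finset_sum _ (fun i' _ => Ient2 i' j)]
    rw [integral_congr_ae (ae_of_all _ (col_sq j))]
    simp
  rw [Finset.sum_congr rfl (fun i' _ => hall i')] at hsum
  rw [Finset.sum_const, Finset.card_univ, Fintype.card_fin, nsmul_eq_mul] at hsum
  rw [hall i]
  field_simp at hsum ⊢
  linarith [hsum]

lemma Ient4 {μ : Measure (orthogonalGroup (Fin N) ℝ)} [IsProbabilityMeasure μ]
    (i j : Fin N) : Integrable (fun x => ent i j x ^ 4) μ :=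
  integ_bdd ((ent_meas i j).pow_const 4) 1 (fun x => by
    rw [abs_pow]; exact pow_le_one₀ (abs_nonneg _) (ent_abs_le i j x))

lemma Ient22 {μ : Measure (orthogonalGroup (Fin N) ℝ)} [IsProbabilityMeasure μ]
    (i k j : Fin N) : Integrable (fun x => ent i j x ^ 2 * ent k j x ^ 2) μ :=
  integ_bdd (((ent_meas i j).pow_const 2).mul ((ent_meas k j).pow_const 2)) 1 (fun x =>
    abs_mul_le_one' (by rw [abs_pow]; exact pow_le_one₀ (abs_nonneg _) (ent_abs_le i j x))
      (by rw [abs_pow]; exact pow_le_one₀ (abs_nonneg _) (ent_abs_le k j x)))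

lemma m4_le {μ : Measure (orthogonalGroup (Fin N) ℝ)} [IsProbabilityMeasure μ]
    (hinv : ∀ g : orthogonalGroup (Fin N) ℝ, MeasurePreserving (fun x => g * x) μ μ)
    (hN : 0 < N) (i j : Fin N) :
    ∫ x, ent i j x ^ 4 ∂μ ≤ 3 / (N : ℝ) ^ 2 := by
  classical
  set i0 : Fin N := ⟨0, hN⟩ with hi0
  set m4 : ℝ := ∫ x, ent i0 j x ^ 4 ∂μ with hm4
  have hall : ∀ i' : Fin N, ∫ x, ent i' j x ^ 4 ∂μ = m4 := by
    intro i'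
    by_cases h : i' = i0
    · rw [h]
    · exact (pair_facts hinv (fun hh => h hh.symm : i0 ≠ i') j).2.1
  have hcross : ∀ i' k' : Fin N, i' ≠ k' →
      ∫ x, ent i' j x ^ 2 * ent k' j x ^ 2 ∂μ = m4 / 3 := by
    intro i' k' h
    rw [(pair_facts hinv h j).2.2, hall i']
  have hm4nn : 0 ≤ m4 := integral_nonneg (fun x => by positivity)
  -- the master identity
  have hone : ∫ x, (∑ i' : Fin N, ent i' j x ^ 2) ^ 2 ∂μ = 1 := by
    have hpt : ∀ x : orthogonalGroup (Fin N) ℝ,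
        (∑ i' : Fin N, ent i' j x ^ 2) ^ 2 = 1 := by
      intro x; rw [col_sq j x]; norm_num
    rw [integral_congr_ae (ae_of_all _ hpt)]
    simp
  have hexp : ∫ x, (∑ i' : Fin N, ent i' j x ^ 2) ^ 2 ∂μ
      = ∑ i' : Fin N, ∑ k' : Fin N, ∫ x, ent i' j x ^ 2 * ent k' j x ^ 2 ∂μ := by
    have hpt : ∀ x : orthogonalGroup (Fin N) ℝ,
        (∑ i' : Fin N, ent i' j x ^ 2) ^ 2
        = ∑ i' : Fin N, ∑ k' : Fin N, ent i' j x ^ 2 * ent k' j x ^ 2 := by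
      intro x
      rw [sq, Finset.sum_mul_sum]
    rw [integral_congr_ae (ae_of_all _ hpt)]
    rw [integral_finset_sum _ (fun i' _ => integrable_finset_sum _ (fun k' _ => Ient22 i' k' j))]
    exact Finset.sum_congr rfl (fun i' _ =>
      integral_finset_sum _ (fun k' _ => Ient22 i' k' j))
  have hval : ∑ i' : Fin N, ∑ k' : Fin N, ∫ x, ent i' j x ^ 2 * ent k' j x ^ 2 ∂μ
      = (N : ℝ) * (m4 + ((N : ℝ) - 1) * (m4 / 3)) := by
    have hrow : ∀ i' : Fin N, ∑ k' : Fin N, ∫ x, ent i' j x ^ 2 * ent k' j x ^ 2 ∂μ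
        = m4 + ((N : ℝ) - 1) * (m4 / 3) := by
      intro i'
      rw [← Finset.add_sum_erase _ _ (Finset.mem_univ i')]
      have hdiag : ∫ x, ent i' j x ^ 2 * ent i' j x ^ 2 ∂μ = m4 := by
        rw [← hall i']
        apply integral_congr_ae (ae_of_all _ (fun x => by ring))
      rw [hdiag]
      congr 1
      rw [Finset.sum_congr rfl (fun k' hk' =>
        hcross i' k' (fun hh => (Finset.mem_erase.mp hk').1 hh.symm))]
      rw [Finset.sum_const, Finset.card_erase_of_mem (Finset.mem_univ i'),
        Finset.card_univ, Fintype.card_fin, nsmul_eq_mul]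
      rw [Nat.cast_sub hN]
      norm_num
    rw [Finset.sum_congr rfl (fun i' _ => hrow i'), Finset.sum_const, Finset.card_univ,
      Fintype.card_fin, nsmul_eq_mul]
  have hkey : (N : ℝ) * (m4 + ((N : ℝ) - 1) * (m4 / 3)) = 1 := by
    rw [← hval, ← hexp, hone]
  have hNR : (1 : ℝ) ≤ (N : ℝ) := by exact_mod_cast hN
  rw [hall i]
  have hN2 : (0:ℝ) < (N:ℝ)^2 := by positivity
  rw [le_div_iff₀ hN2]
  nlinarith [hkey, hm4nn, hNR, mul_nonneg (le_trans zero_le_one hNR) hm4nn]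

lemma ent_abs_int_ge {μ : Measure (orthogonalGroup (Fin N) ℝ)} [IsProbabilityMeasure μ]
    (hinv : ∀ g : orthogonalGroup (Fin N) ℝ, MeasurePreserving (fun x => g * x) μ μ)
    (hN : 0 < N) (i j : Fin N) :
    Real.sqrt (1 / (3 * (N : ℝ))) ≤ ∫ x, |ent i j x| ∂μ := by
  classical
  set a : orthogonalGroup (Fin N) ℝ → ℝ := ent i j with ha
  have ma : Measurable a := ent_meas i j
  have bda : ∀ x, |a x| ≤ 1 := ent_abs_le i j
  have mabs : Measurable (fun x => |a x|) := ma.abs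
  have msq : Measurable (fun x => Real.sqrt |a x|) :=
    Real.continuous_sqrt.measurable.comp mabs
  have bdsq : ∀ x, |(Real.sqrt |a x|)| ≤ 1 := by
    intro x
    rw [abs_of_nonneg (Real.sqrt_nonneg _)]
    rw [show (1:ℝ) = Real.sqrt 1 by simp]
    exact Real.sqrt_le_sqrt (bda x)
  have Iabs : Integrable (fun x => |a x|) μ := integ_bdd mabs 1 (fun x => by
    rw [abs_abs]; exact bda x)
  have Iabs3 : Integrable (fun x => |a x| ^ 3) μ := integ_bdd (mabs.pow_const 3) 1 (fun x => by
    rw [abs_pow, abs_abs]; exact pow_le_one₀ (abs_nonneg _) (bda x))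
  have Ia2 : Integrable (fun x => a x ^ 2) μ := Ient2 i j
  have Ia4 : Integrable (fun x => a x ^ 4) μ := Ient4 i j
  -- CS1 : (∫ a²)² ≤ (∫|a|)(∫|a|³)
  have hCS1 : (∫ x, a x ^ 2 ∂μ) ^ 2 ≤ (∫ x, |a x| ∂μ) * ∫ x, |a x| ^ 3 ∂μ := by
    have h := int_cs (μ := μ) (f := fun x => Real.sqrt |a x|)
      (g := fun x => |a x| * Real.sqrt |a x|) ?hf2 ?hg2 ?hfg
    case hf2 => exact (integ_bdd (msq.pow_const 2) 1 (fun x => by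
      rw [abs_pow]; exact pow_le_one₀ (abs_nonneg _) (bdsq x)))
    case hg2 => exact (integ_bdd ((mabs.mul msq).pow_const 2) 1 (fun x => by
      rw [abs_pow]; exact pow_le_one₀ (abs_nonneg _) (abs_mul_le_one' (by rw [abs_abs]; exact bda x) (bdsq x))))
    case hfg => exact (integ_bdd (msq.mul (mabs.mul msq)) 1 (fun x =>
      abs_mul_le_one' (bdsq x) (abs_mul_le_one' (by rw [abs_abs]; exact bda x) (bdsq x))))
    have e1 : ∀ x : orthogonalGroup (Fin N) ℝ,
        Real.sqrt |a x| * (|a x| * Real.sqrt |a x|) = a x ^ 2 := by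
      intro x
      rw [show Real.sqrt |a x| * (|a x| * Real.sqrt |a x|)
          = (Real.sqrt |a x| * Real.sqrt |a x|) * |a x| by ring,
        Real.mul_self_sqrt (abs_nonneg _), ← abs_mul, ← sq, abs_of_nonneg (sq_nonneg _)]
    have e2 : ∀ x : orthogonalGroup (Fin N) ℝ, (Real.sqrt |a x|) ^ 2 = |a x| :=
      fun x => Real.sq_sqrt (abs_nonneg _)
    have e3 : ∀ x : orthogonalGroup (Fin N) ℝ,
        (|a x| * Real.sqrt |a x|) ^ 2 = |a x| ^ 3 := by
      intro x
      rw [mul_pow, e2 x]; ring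
    rw [integral_congr_ae (ae_of_all _ e1), integral_congr_ae (ae_of_all _ e2),
      integral_congr_ae (ae_of_all _ e3)] at h
    exact h
  -- CS2 : (∫|a|³)² ≤ (∫ a²)(∫ a⁴)
  have hCS2 : (∫ x, |a x| ^ 3 ∂μ) ^ 2 ≤ (∫ x, a x ^ 2 ∂μ) * ∫ x, a x ^ 4 ∂μ := by
    have h := int_cs (μ := μ) (f := fun x => |a x|) (g := fun x => a x ^ 2) ?hf2 ?hg2 ?hfg
    case hf2 => exact integ_bdd (mabs.pow_const 2) 1 (fun x => by
      rw [abs_pow, abs_abs]; exact pow_le_one₀ (abs_nonneg _) (bda x))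
    case hg2 => exact integ_bdd ((ma.pow_const 2).pow_const 2) 1 (fun x => by
      rw [abs_pow]; exact pow_le_one₀ (abs_nonneg _) (by
        rw [abs_pow]; exact pow_le_one₀ (abs_nonneg _) (bda x)))
    case hfg => exact integ_bdd (mabs.mul (ma.pow_const 2)) 1 (fun x =>
      abs_mul_le_one' (by rw [abs_abs]; exact bda x) (by
        rw [abs_pow]; exact pow_le_one₀ (abs_nonneg _) (bda x)))
    have e1 : ∀ x : orthogonalGroup (Fin N) ℝ, |a x| * a x ^ 2 = |a x| ^ 3 := by
      intro x
      rw [← abs_of_nonneg (sq_nonneg (a x)), ← abs_mul]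
      rw [show a x * a x ^ 2 = a x ^ 3 by ring, abs_pow]
    have e2 : ∀ x : orthogonalGroup (Fin N) ℝ, |a x| ^ 2 = a x ^ 2 := fun x => sq_abs _
    have e3 : ∀ x : orthogonalGroup (Fin N) ℝ, (a x ^ 2) ^ 2 = a x ^ 4 := fun x => by ring
    rw [integral_congr_ae (ae_of_all _ e1), integral_congr_ae (ae_of_all _ e2),
      integral_congr_ae (ae_of_all _ e3)] at h
    exact h
  have hB : ∫ x, a x ^ 2 ∂μ = 1 / N := m2_val hinv hN i j
  have hM : ∫ x, a x ^ 4 ∂μ ≤ 3 / (N : ℝ) ^ 2 := m4_le hinv hN i j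
  set A1 := ∫ x, |a x| ∂μ with hA1
  set Q := ∫ x, |a x| ^ 3 ∂μ with hQ
  have hA1nn : 0 ≤ A1 := integral_nonneg (fun x => abs_nonneg _)
  have hQnn : 0 ≤ Q := integral_nonneg (fun x => by positivity)
  have hMnn : 0 ≤ ∫ x, a x ^ 4 ∂μ := integral_nonneg (fun x => by positivity)
  have hNR : (1 : ℝ) ≤ (N : ℝ) := by exact_mod_cast hN
  have hNpos : (0 : ℝ) < (N : ℝ) := by linarith
  -- A1 ^ 2 ≥ 1 / (3 N)
  have hA1sq : 1 / (3 * (N : ℝ)) ≤ A1 ^ 2 := by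
    rw [hB] at hCS1 hCS2
    have h1 : (1 / (N:ℝ)) ^ 2 ≤ A1 * Q := hCS1
    have h2 : Q ^ 2 ≤ (1 / (N:ℝ)) * (3 / (N:ℝ)^2) := le_trans hCS2
      (mul_le_mul_of_nonneg_left hM (by positivity))
    -- (1/N)^4 ≤ (A1 Q)^2 ≤ A1^2 * (3/N^3)
    have h3 : ((1 / (N:ℝ)) ^ 2) ^ 2 ≤ (A1 * Q) ^ 2 := by
      apply pow_le_pow_left₀ (by positivity) h1
    have h4 : (A1 * Q) ^ 2 = A1 ^ 2 * Q ^ 2 := by ring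
    have h5 : A1 ^ 2 * Q ^ 2 ≤ A1 ^ 2 * ((1 / (N:ℝ)) * (3 / (N:ℝ)^2)) :=
      mul_le_mul_of_nonneg_left h2 (by positivity)
    have e0 : (1 / (N:ℝ)) * (3 / (N:ℝ)^2) = 3 / (N:ℝ)^3 := by
      rw [div_mul_div_comm, one_mul, ← pow_succ']
    have h6 : ((1 / (N:ℝ)) ^ 2) ^ 2 ≤ A1 ^ 2 * (3 / (N:ℝ)^3) := by
      calc ((1 / (N:ℝ)) ^ 2) ^ 2 ≤ A1 ^ 2 * ((1 / (N:ℝ)) * (3 / (N:ℝ)^2)) := by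
            linarith [h3, h5, h4.le, h4.ge]
        _ = A1 ^ 2 * (3 / (N:ℝ)^3) := by rw [e0]
    rw [div_le_iff₀ (by positivity)]
    calc 1 = ((1 / (N:ℝ)) ^ 2) ^ 2 * (N:ℝ)^4 := by field_simp
      _ ≤ (A1 ^ 2 * (3 / (N:ℝ)^3)) * (N:ℝ)^4 := by
          apply mul_le_mul_of_nonneg_right h6 (by positivity)
      _ = A1 ^ 2 * (3 * (N:ℝ)) := by field_simp
  calc Real.sqrt (1 / (3 * (N:ℝ))) ≤ Real.sqrt (A1 ^ 2) := Real.sqrt_le_sqrt hA1sq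
    _ = A1 := by rw [Real.sqrt_sq hA1nn]

/-- Let `I₂(N) = ∫_{O(N)} ‖U‖₁² dU`, the second moment of the 1-norm with respect
to the Haar probability measure (i.e. the left-invariant probability measure) on
the compact group `O(N)`. Then for every `ε > 0` there is `N₀` such that
`I₂(N) ≥ (1 + 4/π − ε)·N²` for all `N ≥ N₀`. -/
theorem second_moment_norm1_asymptotic :
    ∀ ε > (0 : ℝ), ∃ N₀ : ℕ, ∀ N ≥ N₀,
      ∀ μ : Measure (Matrix.orthogonalGroup (Fin N) ℝ),
        IsProbabilityMeasure μ →
        (∀ g : Matrix.orthogonalGroup (Fin N) ℝ,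
          MeasurePreserving (fun x => g * x) μ μ) →
        (1 + 4 / Real.pi - ε) * (N : ℝ) ^ 2 ≤
          ∫ U, (∑ i, ∑ j, |(U : Matrix (Fin N) (Fin N) ℝ) i j|) ^ 2 ∂μ := by
  intro ε hε
  refine ⟨9, fun N hN μ hprob hinv => ?_⟩
  haveI := hprob
  have hNpos : 0 < N := by omega
  have hNR : (9 : ℝ) ≤ (N : ℝ) := by exact_mod_cast hN
  have hNpos' : (0 : ℝ) < (N : ℝ) := by linarith
  classical
  set S : orthogonalGroup (Fin N) ℝ → ℝ := fun U => ∑ i, ∑ j, |ent i j U| with hS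
  have hSmeas : Measurable S :=
    Finset.measurable_sum _ (fun i _ => Finset.measurable_sum _ (fun j _ => (ent_meas i j).abs))
  have hSbd : ∀ U, |S U| ≤ (N : ℝ) ^ 2 := by
    intro U
    have h0 : 0 ≤ S U := Finset.sum_nonneg fun i _ =>
      Finset.sum_nonneg fun j _ => abs_nonneg _
    rw [abs_of_nonneg h0]
    calc S U ≤ ∑ i : Fin N, ∑ j : Fin N, (1 : ℝ) := by
          apply Finset.sum_le_sum; intro i _
          apply Finset.sum_le_sum; intro j _
          exact ent_abs_le i j U
      _ = (N : ℝ) ^ 2 := by simp [sq]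
  have hInt : Integrable S μ := integ_bdd hSmeas ((N:ℝ)^2) hSbd
  have hInt2 : Integrable (fun x => S x ^ 2) μ := integ_bdd (hSmeas.pow_const 2) ((N:ℝ)^4)
    (fun x => by
      rw [abs_pow]
      calc |S x| ^ 2 ≤ ((N:ℝ)^2) ^ 2 := by
            apply pow_le_pow_left₀ (abs_nonneg _) (hSbd x)
        _ = (N:ℝ)^4 := by ring)
  -- Jensen: (∫ S)² ≤ ∫ S²
  have hJensen : (∫ x, S x ∂μ) ^ 2 ≤ ∫ x, S x ^ 2 ∂μ := by
    have h := int_cs (μ := μ) (f := S) (g := fun _ => (1 : ℝ)) hInt2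
      (by simpa using (integrable_const (1:ℝ))) (by simpa using hInt)
    simpa using h
  -- lower bound on ∫ S
  have hES : (N : ℝ) ^ 2 * Real.sqrt (1 / (3 * (N : ℝ))) ≤ ∫ x, S x ∂μ := by
    have hsum : ∫ x, S x ∂μ = ∑ i : Fin N, ∑ j : Fin N, ∫ x, |ent i j x| ∂μ := by
      rw [integral_finset_sum _ (fun i _ => integrable_finset_sum _ (fun j _ =>
        integ_bdd (ent_meas i j).abs 1 (fun x => by rw [abs_abs]; exact ent_abs_le i j x)))]
      exact Finset.sum_congr rfl (fun i _ => integral_finset_sum _ (fun j _ =>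
        integ_bdd (ent_meas i j).abs 1 (fun x => by rw [abs_abs]; exact ent_abs_le i j x)))
    rw [hsum]
    calc (N : ℝ) ^ 2 * Real.sqrt (1 / (3 * (N : ℝ)))
        = ∑ _i : Fin N, ∑ _j : Fin N, Real.sqrt (1 / (3 * (N : ℝ))) := by
          simp [Finset.sum_const, nsmul_eq_mul]; ring
      _ ≤ ∑ i : Fin N, ∑ j : Fin N, ∫ x, |ent i j x| ∂μ := by
          apply Finset.sum_le_sum; intro i _
          apply Finset.sum_le_sum; intro j _
          exact ent_abs_int_ge hinv hNpos i j
  have hESnn : 0 ≤ (N : ℝ) ^ 2 * Real.sqrt (1 / (3 * (N : ℝ))) := by positivity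
  have hsq : ((N : ℝ) ^ 2 * Real.sqrt (1 / (3 * (N : ℝ)))) ^ 2 = (N:ℝ)^3 / 3 := by
    rw [mul_pow, Real.sq_sqrt (by positivity)]
    field_simp
  have hMain : (N:ℝ)^3 / 3 ≤ ∫ x, S x ^ 2 ∂μ := by
    calc (N:ℝ)^3 / 3 = ((N : ℝ) ^ 2 * Real.sqrt (1 / (3 * (N : ℝ)))) ^ 2 := hsq.symm
      _ ≤ (∫ x, S x ∂μ) ^ 2 := by
          apply pow_le_pow_left₀ hESnn hES
      _ ≤ ∫ x, S x ^ 2 ∂μ := hJensen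
  have hπ : (1 : ℝ) + 4 / Real.pi - ε ≤ 3 := by
    have hπ3 : (3 : ℝ) < Real.pi := Real.pi_gt_three
    have h4 : 4 / Real.pi ≤ 2 := by
      rw [div_le_iff₀ (by linarith)]
      linarith
    linarith
  have hfinal : (1 + 4 / Real.pi - ε) * (N : ℝ) ^ 2 ≤ (N:ℝ)^3 / 3 := by
    calc (1 + 4 / Real.pi - ε) * (N : ℝ) ^ 2 ≤ 3 * (N : ℝ) ^ 2 := by
          apply mul_le_mul_of_nonneg_right hπ (by positivity)
      _ ≤ (N:ℝ)^3 / 3 := by nlinarith [hNR, hNpos']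
  calc (1 + 4 / Real.pi - ε) * (N : ℝ) ^ 2 ≤ (N:ℝ)^3 / 3 := hfinal
    _ ≤ ∫ x, S x ^ 2 ∂μ := hMain
    _ = ∫ U, (∑ i, ∑ j, |(U : Matrix (Fin N) (Fin N) ℝ) i j|) ^ 2 ∂μ := rfl
end

section
/- Let 1 ≤ p < 2 and U ∈ O(N). Then the p-norm satisfies ||U||_p ≤ N^{2/p − 1/2}, with equality if and only if |U_{ij}| = 1/√N for all i,j (i.e., if and only if √N·U is a Hadamard matrix). -/
open Matrix

/-- A Hadamard matrix: all entries are `±1` and the rows are pairwise orthogonal. -/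
def IsHadamard {N : ℕ} (H : Matrix (Fin N) (Fin N) ℝ) : Prop :=
  (∀ i j, H i j = 1 ∨ H i j = -1) ∧
    ∀ i j, i ≠ j → ∑ k, H i k * H j k = 0

lemma tangent_le {c x q : ℝ} (hc : 0 < c) (hx : 0 ≤ x) (hq1 : 0 < q) (hq2 : q < 1) :
    x ^ q ≤ c ^ q + q * c ^ (q - 1) * (x - c) := by
  have hdc : 0 ≤ x / c := div_nonneg hx hc.le
  have hs : -1 ≤ x / c - 1 := by linarith
  have h := rpow_one_add_le_one_add_mul_self hs hq1.le hq2.le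
  have hx' : x = c * (1 + (x / c - 1)) := by field_simp; ring
  have hcq : 0 < c ^ q := Real.rpow_pos_of_pos hc q
  calc x ^ q = (c * (1 + (x / c - 1))) ^ q := by rw [← hx']
    _ = c ^ q * (1 + (x / c - 1)) ^ q := Real.mul_rpow hc.le (by linarith)
    _ ≤ c ^ q * (1 + q * (x / c - 1)) := by nlinarith
    _ = c ^ q + q * c ^ (q - 1) * (x - c) := by
        rw [Real.rpow_sub hc, Real.rpow_one]; field_simp

lemma tangent_lt {c x q : ℝ} (hc : 0 < c) (hx : 0 ≤ x) (hne : x ≠ c) (hq1 : 0 < q)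
    (hq2 : q < 1) :
    x ^ q < c ^ q + q * c ^ (q - 1) * (x - c) := by
  have hdc : 0 ≤ x / c := div_nonneg hx hc.le
  have hs : -1 ≤ x / c - 1 := by linarith
  have hs' : x / c - 1 ≠ 0 := by
    intro h
    apply hne
    field_simp at h
    linarith
  have h := rpow_one_add_lt_one_add_mul_self hs hs' hq1 hq2
  have hx' : x = c * (1 + (x / c - 1)) := by field_simp; ring
  have hcq : 0 < c ^ q := Real.rpow_pos_of_pos hc q
  calc x ^ q = (c * (1 + (x / c - 1))) ^ q := by rw [← hx']
    _ = c ^ q * (1 + (x / c - 1)) ^ q := Real.mul_rpow hc.le (by linarith)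
    _ < c ^ q * (1 + q * (x / c - 1)) := by nlinarith
    _ = c ^ q + q * c ^ (q - 1) * (x - c) := by
        rw [Real.rpow_sub hc, Real.rpow_one]; field_simp

lemma tangent_eq_iff {c x q : ℝ} (hc : 0 < c) (hx : 0 ≤ x) (hq1 : 0 < q) (hq2 : q < 1) :
    x ^ q = c ^ q + q * c ^ (q - 1) * (x - c) ↔ x = c := by
  constructor
  · intro h
    by_contra hne
    exact absurd h (ne_of_lt (tangent_lt hc hx hne hq1 hq2))
  · rintro rfl; simp

/-- For `1 ≤ p < 2` and `U ∈ O(N)`, the `p`-norm satisfies `‖U‖_p ≤ N^{2/p − 1/2}`,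
with equality iff `|Uᵢⱼ| = 1/√N` for all `i, j`, iff `√N·U` is a Hadamard matrix. -/
theorem pnorm_le_of_orthogonal (N : ℕ) (p : ℝ) (hp1 : 1 ≤ p) (hp2 : p < 2)
    (U : Matrix (Fin N) (Fin N) ℝ) (hU : U * Uᵀ = 1) :
    (∑ i, ∑ j, |U i j| ^ p) ^ (1 / p) ≤ (N : ℝ) ^ (2 / p - 1 / 2) ∧
    ((∑ i, ∑ j, |U i j| ^ p) ^ (1 / p) = (N : ℝ) ^ (2 / p - 1 / 2) ↔
      ∀ i j, |U i j| = 1 / Real.sqrt N) ∧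
    ((∑ i, ∑ j, |U i j| ^ p) ^ (1 / p) = (N : ℝ) ^ (2 / p - 1 / 2) ↔
      _root_.IsHadamard (Real.sqrt N • U)) := by
  have hp0 : (0:ℝ) < p := by linarith
  rcases Nat.eq_zero_or_pos N with rfl | hN
  · have h0 : (∑ i : Fin 0, ∑ j : Fin 0, |U i j| ^ p) ^ (1 / p)
        = ((0:ℕ) : ℝ) ^ (2 / p - 1 / 2) := by
      have h1 : (2 : ℝ) / p - 1 / 2 ≠ 0 := by
        have : (1:ℝ) < 2 / p := by
          rw [lt_div_iff₀ hp0]; linarith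
        intro h; rw [sub_eq_zero] at h; rw [h] at this; norm_num at this
      have h2 : (1 : ℝ) / p ≠ 0 := by positivity
      have hz : (∑ i : Fin 0, ∑ j : Fin 0, |U i j| ^ p) = 0 := by simp
      rw [hz, Nat.cast_zero, Real.zero_rpow h2, Real.zero_rpow h1]
    exact ⟨le_of_eq h0, iff_of_true h0 (fun i => i.elim0),
      iff_of_true h0 ⟨fun i => i.elim0, fun i => i.elim0⟩⟩
  · have hNR : (0:ℝ) < N := by exact_mod_cast hN
    set q : ℝ := p / 2 with hq_def
    set c : ℝ := ((N:ℝ))⁻¹ with hc_def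
    have hq1 : 0 < q := by simp only [hq_def]; linarith
    have hq2 : q < 1 := by simp only [hq_def]; linarith
    have hc : 0 < c := inv_pos.mpr hNR
    have hNc : (N:ℝ) * c = 1 := mul_inv_cancel₀ hNR.ne'
    -- row sums of squares are 1
    have hrow : ∀ i, ∑ j, (U i j) ^ 2 = 1 := by
      intro i
      have := congrFun (congrFun hU i) i
      simpa [Matrix.mul_apply, Matrix.one_apply, pow_two] using this
    have hterm : ∀ i j, |U i j| ^ p = ((U i j) ^ 2) ^ q := by
      intro i j
      rw [← sq_abs, ← Real.rpow_natCast |U i j| 2, ← Real.rpow_mul (abs_nonneg _)]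
      norm_num
      congr 1
      simp only [hq_def]; ring
    have hS : (∑ i, ∑ j, |U i j| ^ p) = ∑ i, ∑ j, ((U i j) ^ 2) ^ q := by
      simp only [hterm]
    -- sum of tangent bounds
    have hrow_g : ∀ i : Fin N,
        ∑ j, (c ^ q + q * c ^ (q - 1) * ((U i j) ^ 2 - c)) = (N:ℝ) * c ^ q := by
      intro i
      have hz : ∑ j, ((U i j) ^ 2 - c) = 0 := by
        rw [Finset.sum_sub_distrib, hrow i, Finset.sum_const, Finset.card_univ,
          Fintype.card_fin, nsmul_eq_mul, hNc, sub_self]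
      rw [Finset.sum_add_distrib, ← Finset.mul_sum, hz, mul_zero, add_zero,
        Finset.sum_const, Finset.card_univ, Fintype.card_fin, nsmul_eq_mul]
    have hg_total : (∑ _i : Fin N, (N:ℝ) * c ^ q) = (N:ℝ) * ((N:ℝ) * c ^ q) := by
      rw [Finset.sum_const, Finset.card_univ, Fintype.card_fin, nsmul_eq_mul]
    set K : ℝ := (N:ℝ) * ((N:ℝ) * c ^ q) with hK_def
    have hg2 : (∑ i : Fin N, ∑ j : Fin N,
        (c ^ q + q * c ^ (q - 1) * ((U i j) ^ 2 - c))) = K := by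
      rw [← hg_total]
      exact Finset.sum_congr rfl fun i _ => hrow_g i
    have h_le_K : (∑ i, ∑ j, ((U i j) ^ 2) ^ q) ≤ K := by
      rw [← hg2]
      exact Finset.sum_le_sum fun i _ =>
        Finset.sum_le_sum fun j _ => tangent_le hc (sq_nonneg _) hq1 hq2
    have h_eq_iff : (∑ i, ∑ j, ((U i j) ^ 2) ^ q) = K ↔ ∀ i j, (U i j) ^ 2 = c := by
      rw [← hg2, ← Finset.sum_product', ← Finset.sum_product',
        Finset.sum_eq_sum_iff_of_le (fun x _ => tangent_le hc (sq_nonneg _) hq1 hq2)]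
      constructor
      · intro h i j
        exact (tangent_eq_iff hc (sq_nonneg _) hq1 hq2).mp (h (i, j) (Finset.mem_univ _))
      · intro h x _
        exact (tangent_eq_iff hc (sq_nonneg _) hq1 hq2).mpr (h x.1 x.2)
    -- rpow algebra
    have hK : K = (N:ℝ) ^ ((2:ℝ) - q) := by
      have hcq : c ^ q = (N:ℝ) ^ (-q) := by
        rw [hc_def, ← Real.rpow_neg_one, ← Real.rpow_mul hNR.le]
        congr 1; ring
      rw [hK_def, hcq, show ((2:ℝ) - q) = 1 + (1 + -q) by ring,
        Real.rpow_add hNR, Real.rpow_add hNR, Real.rpow_one]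
    have hKp : K ^ (1 / p) = (N:ℝ) ^ (2 / p - 1 / 2) := by
      rw [hK, ← Real.rpow_mul hNR.le]
      congr 1
      simp only [hq_def]
      field_simp
    have hT_nonneg : 0 ≤ ∑ i, ∑ j, ((U i j) ^ 2) ^ q := by
      refine Finset.sum_nonneg fun i _ => Finset.sum_nonneg fun j _ => ?_
      positivity
    have hK_nonneg : 0 ≤ K := by
      rw [hK]; positivity
    have hmain_le : (∑ i, ∑ j, |U i j| ^ p) ^ (1 / p) ≤ (N : ℝ) ^ (2 / p - 1 / 2) := by
      rw [hS, ← hKp]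
      exact Real.rpow_le_rpow hT_nonneg h_le_K (by positivity)
    have hmain_iff : (∑ i, ∑ j, |U i j| ^ p) ^ (1 / p) = (N : ℝ) ^ (2 / p - 1 / 2) ↔
        ∀ i j, (U i j) ^ 2 = c := by
      rw [hS, ← hKp, ← h_eq_iff]
      constructor
      · intro h
        have h2 : ((∑ i, ∑ j, ((U i j) ^ 2) ^ q) ^ (1 / p)) ^ p = (K ^ (1 / p)) ^ p := by
          rw [h]
        rw [← Real.rpow_mul hT_nonneg, ← Real.rpow_mul hK_nonneg,
          one_div, inv_mul_cancel₀ hp0.ne', Real.rpow_one, Real.rpow_one] at h2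
        exact h2
      · intro h; rw [h]
    -- entries characterization
    have habs2 : (∀ i j, (U i j) ^ 2 = c) ↔ ∀ i j, |U i j| = 1 / Real.sqrt N := by
      refine forall_congr' fun i => forall_congr' fun j => ?_
      constructor
      · intro h
        have := congrArg Real.sqrt h
        rwa [Real.sqrt_sq_eq_abs, hc_def, Real.sqrt_inv, ← one_div] at this
      · intro h
        rw [← sq_abs, h, div_pow, one_pow, Real.sq_sqrt hNR.le, hc_def, one_div]
    have hsq : 0 < Real.sqrt N := Real.sqrt_pos.mpr hNR
    have hss : Real.sqrt N * Real.sqrt N = (N:ℝ) := Real.mul_self_sqrt hNR.le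
    have hHad : (∀ i j, |U i j| = 1 / Real.sqrt N) ↔ _root_.IsHadamard (Real.sqrt N • U) := by
      constructor
      · intro h
        constructor
        · intro i j
          have h1 : |Real.sqrt N * U i j| = 1 := by
            rw [abs_mul, abs_of_nonneg hsq.le, h i j]
            field_simp
          have := (abs_eq (by norm_num : (0:ℝ) ≤ 1)).mp h1
          simpa [Matrix.smul_apply, smul_eq_mul] using this
        · intro i j hij
          have horth := congrFun (congrFun hU i) j
          simp only [Matrix.mul_apply, Matrix.transpose_apply, Matrix.one_apply, hij,
            if_false] at horth
          simp only [Matrix.smul_apply, smul_eq_mul]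
          have hterm' : ∀ k, Real.sqrt N * U i k * (Real.sqrt N * U j k)
              = (N:ℝ) * (U i k * U j k) := by
            intro k
            calc Real.sqrt N * U i k * (Real.sqrt N * U j k)
                = (Real.sqrt N * Real.sqrt N) * (U i k * U j k) := by ring
              _ = (N:ℝ) * (U i k * U j k) := by rw [hss]
          rw [Finset.sum_congr rfl (fun k _ => hterm' k), ← Finset.mul_sum, horth, mul_zero]
      · rintro ⟨h1, _⟩ i j
        have h2 := h1 i j
        simp only [Matrix.smul_apply, smul_eq_mul] at h2
        have habs : |Real.sqrt N * U i j| = 1 := by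
          rcases h2 with h | h <;> rw [h] <;> norm_num
        rw [abs_mul, abs_of_nonneg hsq.le] at habs
        rw [eq_div_iff hsq.ne']
        linear_combination habs
    refine ⟨hmain_le, hmain_iff.trans habs2, (hmain_iff.trans habs2).trans hHad⟩
end
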